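/- Let p be a Borel probability measure on ℝ^d with finite second moment σ_p² = ∫ ‖ω‖² dp(ω) < ∞, and let κ(δ) = ∫_{ℝ^d} cos(⟪ω, δ⟫) dp(ω). Let X ⊆ ℝ^d be a compact set contained in the closed Euclidean ball of radius R centered at the origin, let ω_1, …, ω_D be i.i.d. random vectors with distribution p, and let s(δ) = (1/D) Σ_{j=1}^D cos(⟪ω_j, δ⟫). Fix 0 < r ≤ 2R and ε > 0, and let C be any finite set of B points in ℝ^d such that every point of the closed ball of radius 2R lies within Euclidean distance r of some point of C. Then P( sup_{x, x' ∈ X} | s(x − x') − κ(x − x') | ≥ ε ) ≤ 2 B exp(− D ε² / 8) + (4 r σ_p / ε)². -/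

import Mathlib

open MeasureTheory ProbabilityTheory Real
open scoped RealInnerProductSpace

open scoped ENNReal

lemma aux_cos_lip (a b : ℝ) : |Real.cos a - Real.cos b| ≤ |a - b| := by
  rw [Real.cos_sub_cos]
  calc |(-2) * Real.sin ((a + b) / 2) * Real.sin ((a - b) / 2)|
      = 2 * |Real.sin ((a + b) / 2)| * |Real.sin ((a - b) / 2)| := by
        rw [abs_mul, abs_mul]; norm_num
    _ ≤ 2 * 1 * |(a - b) / 2| := by
        have h1 := Real.abs_sin_le_one ((a + b) / 2)
        have h2 : |Real.sin ((a - b) / 2)| ≤ |(a - b) / 2| := Real.abs_sin_le_abs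
        have h3 := abs_nonneg (Real.sin ((a - b) / 2))
        have h4 := abs_nonneg (Real.sin ((a + b) / 2))
        nlinarith
    _ = |a - b| := by rw [abs_div, abs_two]; ring

lemma aux_int_bdd {Ω : Type*} [MeasurableSpace Ω] {μ : Measure Ω} [IsFiniteMeasure μ]
    {f : Ω → ℝ} (hf : AEStronglyMeasurable f μ) {M : ℝ} (h : ∀ ω, |f ω| ≤ M) :
    Integrable f μ :=
  Integrable.mono' (integrable_const M) hf (Filter.Eventually.of_forall fun ω => h ω)

lemma aux_abs_integral {Ω : Type*} [MeasurableSpace Ω] {μ : Measure Ω} (f : Ω → ℝ) :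
    |∫ ω, f ω ∂μ| ≤ ∫ ω, |f ω| ∂μ := by
  simpa [Real.norm_eq_abs] using norm_integral_le_integral_norm (μ := μ) f

lemma hoeffding_core (q h : ℝ) (hq0 : 0 ≤ q) (hq1 : q ≤ 1) :
    (1 - q) * Real.exp (-q * h) + q * Real.exp ((1 - q) * h) ≤ Real.exp (h ^ 2 / 8) := by
  set Dq : ℝ → ℝ := fun x => 1 - q + q * Real.exp x with hDq
  have hDpos : ∀ x, 0 < Dq x := by
    intro x
    rcases eq_or_lt_of_le hq1 with h1 | h1
    · simp only [hDq, h1]; simpa using Real.exp_pos x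
    · have h2 : (0:ℝ) < 1 - q := by linarith
      have h3 := mul_nonneg hq0 (Real.exp_pos x).le
      simp only [hDq]; linarith
  set G : ℝ → ℝ := fun x => x ^ 2 / 8 + q * x - Real.log (Dq x) with hG
  set G1 : ℝ → ℝ := fun x => x / 4 + q - q * Real.exp x / Dq x with hG1
  have hDq' : ∀ x, HasDerivAt Dq (q * Real.exp x) x := by
    intro x
    exact ((Real.hasDerivAt_exp x).const_mul q).const_add (1 - q)
  have hG' : ∀ x, HasDerivAt G (G1 x) x := by
    intro x
    have h1 : HasDerivAt (fun y : ℝ => y ^ 2 / 8) (x / 4) x := by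
      have := (hasDerivAt_pow 2 x).div_const 8
      have e : ((2:ℕ):ℝ) * x ^ (2 - 1) / 8 = x / 4 := by
        rw [show (2:ℕ) - 1 = 1 from rfl, pow_one]; push_cast; ring
      rw [e] at this; exact this
    have h2 : HasDerivAt (fun y : ℝ => q * y) q x := by
      simpa using (hasDerivAt_id x).const_mul q
    have h3 : HasDerivAt (fun y => Real.log (Dq y)) (q * Real.exp x / Dq x) x :=
      (hDq' x).log (hDpos x).ne'
    exact (h1.add h2).sub h3
  have hG1' : ∀ x, HasDerivAt G1
      (1 / 4 - (q * Real.exp x * Dq x - q * Real.exp x * (q * Real.exp x)) / (Dq x) ^ 2) x := by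
    intro x
    have h1 : HasDerivAt (fun y : ℝ => y / 4 + q) (1 / 4) x := by
      simpa using ((hasDerivAt_id x).div_const 4).add_const q
    have h2 : HasDerivAt (fun y => q * Real.exp y / Dq y)
        ((q * Real.exp x * Dq x - q * Real.exp x * (q * Real.exp x)) / (Dq x) ^ 2) x :=
      ((Real.hasDerivAt_exp x).const_mul q).div (hDq' x) (hDpos x).ne'
    exact h1.sub h2
  have hG2 : ∀ x, 0 ≤ 1 / 4 - (q * Real.exp x * Dq x - q * Real.exp x * (q * Real.exp x)) / (Dq x) ^ 2 := by
    intro x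
    rw [sub_nonneg, div_le_iff₀ (pow_pos (hDpos x) 2)]
    have hD := hDpos x
    have he := (Real.exp_pos x).le
    simp only [hDq] at *
    nlinarith [sq_nonneg ((1 - q) - q * Real.exp x), mul_nonneg hq0 he]
  have hG1mono : Monotone G1 :=
    monotone_of_deriv_nonneg (fun x => (hG1' x).differentiableAt)
      (fun x => by rw [(hG1' x).deriv]; exact hG2 x)
  have hG10 : G1 0 = 0 := by
    simp only [hG1, hDq, Real.exp_zero, mul_one]
    have : 1 - q + q = 1 := by ring
    rw [this]
    norm_num
  have hGdiff : Differentiable ℝ G := fun x => (hG' x).differentiableAt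
  have hG0 : G 0 = 0 := by
    simp only [hG, hDq, Real.exp_zero, mul_one]
    have : 1 - q + q = 1 := by ring
    rw [this]
    simp
  have hGnonneg : ∀ x, 0 ≤ G x := by
    intro x
    rcases le_total 0 x with hx | hx
    · have hmono := monotoneOn_of_deriv_nonneg (convex_Ici (0:ℝ))
        hGdiff.continuous.continuousOn (fun y _ => (hGdiff y).differentiableWithinAt)
        (fun y hy => by
          rw [(hG' y).deriv]
          rw [interior_Ici] at hy
          calc (0:ℝ) = G1 0 := hG10.symm
            _ ≤ G1 y := hG1mono (le_of_lt hy))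
      have := hmono Set.self_mem_Ici hx hx
      rw [hG0] at this; linarith
    · have hanti := antitoneOn_of_deriv_nonpos (convex_Iic (0:ℝ))
        hGdiff.continuous.continuousOn (fun y _ => (hGdiff y).differentiableWithinAt)
        (fun y hy => by
          rw [(hG' y).deriv]
          rw [interior_Iic] at hy
          calc G1 y ≤ G1 0 := hG1mono (le_of_lt hy)
            _ = 0 := hG10)
      have := hanti hx Set.self_mem_Iic hx
      rw [hG0] at this; linarith
  have e1 : Real.exp (-q * h) * Real.exp h = Real.exp ((1 - q) * h) := by
    rw [← Real.exp_add]; congr 1; ring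
  have lhs_eq : (1 - q) * Real.exp (-q * h) + q * Real.exp ((1 - q) * h)
      = Real.exp (-q * h + Real.log (Dq h)) := by
    rw [Real.exp_add, Real.exp_log (hDpos h)]
    simp only [hDq]
    rw [← e1]; ring
  rw [lhs_eq]
  apply Real.exp_le_exp.2
  have := hGnonneg h
  simp only [hG] at this
  linarith

lemma mgf_le_hoeffding {Ω : Type*} [MeasurableSpace Ω] {μ : Measure Ω} [IsProbabilityMeasure μ]
    {Z : Ω → ℝ} (hZ : Measurable Z) {a b : ℝ} (hab : a < b)
    (hZa : ∀ ω, a ≤ Z ω) (hZb : ∀ ω, Z ω ≤ b) (hmean : ∫ ω, Z ω ∂μ = 0) (t : ℝ) :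
    mgf Z μ t ≤ Real.exp (t ^ 2 * (b - a) ^ 2 / 8) := by
  have hba : (0:ℝ) < b - a := by linarith
  have habs : ∀ ω, |Z ω| ≤ max |a| |b| := by
    intro ω
    rw [abs_le]
    constructor
    · calc -(max |a| |b|) ≤ -|a| := by simp
        _ ≤ a := neg_abs_le a
        _ ≤ Z ω := hZa ω
    · exact (hZb ω).trans ((le_abs_self b).trans (le_max_right _ _))
  have hZint : Integrable Z μ := aux_int_bdd hZ.aestronglyMeasurable habs
  have ha0 : a ≤ 0 := by
    have h := integral_mono (integrable_const a) hZint (fun ω => hZa ω)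
    simpa [hmean] using h
  have hb0 : 0 ≤ b := by
    have h := integral_mono hZint (integrable_const b) (fun ω => hZb ω)
    simpa [hmean] using h
  have hpt : ∀ ω, Real.exp (t * Z ω) ≤
      (b - Z ω) / (b - a) * Real.exp (t * a) + (Z ω - a) / (b - a) * Real.exp (t * b) := by
    intro ω
    have hθ1 : 0 ≤ (Z ω - a) / (b - a) := div_nonneg (by linarith [hZa ω]) hba.le
    have hθ2 : 0 ≤ (b - Z ω) / (b - a) := div_nonneg (by linarith [hZb ω]) hba.le
    have hsum : (b - Z ω) / (b - a) + (Z ω - a) / (b - a) = 1 := by field_simp; ring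
    have hcvx := convexOn_exp.2 (Set.mem_univ (t * a)) (Set.mem_univ (t * b)) hθ2 hθ1 hsum
    have harg : (b - Z ω) / (b - a) * (t * a) + (Z ω - a) / (b - a) * (t * b) = t * Z ω := by
      field_simp; ring
    simpa [smul_eq_mul, harg] using hcvx
  have hexpint : Integrable (fun ω => Real.exp (t * Z ω)) μ := by
    apply aux_int_bdd (hZ.const_mul t).exp.aestronglyMeasurable
      (M := Real.exp (|t| * max |a| |b|))
    intro ω
    rw [abs_of_pos (Real.exp_pos _)]
    apply Real.exp_le_exp.2
    calc t * Z ω ≤ |t * Z ω| := le_abs_self _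
      _ = |t| * |Z ω| := abs_mul _ _
      _ ≤ |t| * max |a| |b| := by
          exact mul_le_mul_of_nonneg_left (habs ω) (abs_nonneg t)
  have hint2 : Integrable
      (fun ω => (b - Z ω) / (b - a) * Real.exp (t * a) + (Z ω - a) / (b - a) * Real.exp (t * b)) μ := by
    apply Integrable.add
    · exact (((integrable_const b).sub hZint).div_const _).mul_const _
    · exact ((hZint.sub (integrable_const a)).div_const _).mul_const _
  have hI : ∫ ω, ((b - Z ω) / (b - a) * Real.exp (t * a) + (Z ω - a) / (b - a) * Real.exp (t * b)) ∂μ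
      = b / (b - a) * Real.exp (t * a) + (-a) / (b - a) * Real.exp (t * b) := by
    have i1 : ∫ ω, (b - Z ω) / (b - a) ∂μ = b / (b - a) := by
      rw [integral_div, integral_sub (integrable_const b) hZint, hmean, integral_const]
      simp
    have i2 : ∫ ω, (Z ω - a) / (b - a) ∂μ = -a / (b - a) := by
      rw [integral_div, integral_sub hZint (integrable_const a), hmean, integral_const]
      simp
    have ja : Integrable (fun ω => b - Z ω) μ := (integrable_const b).sub hZint
    have jb : Integrable (fun ω => Z ω - a) μ := hZint.sub (integrable_const a)
    have ja' : Integrable (fun ω => (b - Z ω) / (b - a) * Real.exp (t * a)) μ :=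
      (ja.div_const _).mul_const _
    have jb' : Integrable (fun ω => (Z ω - a) / (b - a) * Real.exp (t * b)) μ :=
      (jb.div_const _).mul_const _
    rw [integral_add ja' jb', integral_mul_const, integral_mul_const, i1, i2]
  set q : ℝ := -a / (b - a) with hq
  have hq0 : 0 ≤ q := div_nonneg (by linarith) hba.le
  have hq1 : q ≤ 1 := by
    rw [hq, div_le_one hba]; linarith
  set hh : ℝ := t * (b - a) with hhdef
  have e1 : t * a = -q * hh := by rw [hq, hhdef]; field_simp
  have e2 : t * b = (1 - q) * hh := by rw [hq, hhdef]; field_simp; ring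
  have e3 : b / (b - a) = 1 - q := by rw [hq]; field_simp; ring
  calc mgf Z μ t = ∫ ω, Real.exp (t * Z ω) ∂μ := rfl
    _ ≤ ∫ ω, ((b - Z ω) / (b - a) * Real.exp (t * a) + (Z ω - a) / (b - a) * Real.exp (t * b)) ∂μ :=
        integral_mono hexpint hint2 hpt
    _ = (1 - q) * Real.exp (-q * hh) + q * Real.exp ((1 - q) * hh) := by
        rw [hI, e1, e2, e3]
    _ ≤ Real.exp (hh ^ 2 / 8) := hoeffding_core q hh hq0 hq1
    _ = Real.exp (t ^ 2 * (b - a) ^ 2 / 8) := by rw [hhdef]; congr 1; ring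

lemma chernoff_side {Ω : Type*} [MeasurableSpace Ω] (P : Measure Ω) [IsProbabilityMeasure P]
    {D : ℕ} {Z : Fin D → Ω → ℝ} (hmeas : ∀ j, Measurable (Z j))
    (hindep : iIndepFun Z P)
    {a b : ℝ} (hab : a < b) (hw : b - a = 2)
    (hZa : ∀ j ω, a ≤ Z j ω) (hZb : ∀ j ω, Z j ω ≤ b)
    (hmean : ∀ j, ∫ ω, Z j ω ∂P = 0) {t : ℝ} (ht : 0 < t) :
    P {ξ | (D : ℝ) * t ≤ ∑ j, Z j ξ} ≤ ENNReal.ofReal (Real.exp (-((D : ℝ) * t ^ 2) / 2)) := by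
  have habs : ∀ j ω, |Z j ω| ≤ max |a| |b| := by
    intro j ω
    rw [abs_le]
    refine ⟨?_, (hZb j ω).trans ((le_abs_self b).trans (le_max_right _ _))⟩
    calc -(max |a| |b|) ≤ -|a| := by simp
      _ ≤ a := neg_abs_le a
      _ ≤ Z j ω := hZa j ω
  have hintexp : ∀ j, Integrable (fun ω => Real.exp (t * Z j ω)) P := by
    intro j
    apply aux_int_bdd ((hmeas j).const_mul t).exp.aestronglyMeasurable
      (M := Real.exp (|t| * max |a| |b|))
    intro ω
    rw [abs_of_pos (Real.exp_pos _)]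
    apply Real.exp_le_exp.2
    calc t * Z j ω ≤ |t * Z j ω| := le_abs_self _
      _ = |t| * |Z j ω| := abs_mul _ _
      _ ≤ |t| * max |a| |b| := mul_le_mul_of_nonneg_left (habs j ω) (abs_nonneg t)
  have hintS : Integrable (fun ω => Real.exp (t * (∑ j, Z j) ω)) P :=
    hindep.integrable_exp_mul_sum hmeas (fun j _ => hintexp j)
  have hmgf : mgf (∑ j, Z j) P t ≤ Real.exp ((D : ℝ) * t ^ 2 / 2) := by
    rw [hindep.mgf_sum hmeas Finset.univ]
    calc ∏ j : Fin D, mgf (Z j) P t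
        ≤ ∏ _j : Fin D, Real.exp (t ^ 2 * (b - a) ^ 2 / 8) :=
          Finset.prod_le_prod (fun j _ => mgf_nonneg)
            (fun j _ => mgf_le_hoeffding (hmeas j) hab (hZa j) (hZb j) (hmean j) t)
      _ = Real.exp ((D : ℝ) * t ^ 2 / 2) := by
          rw [Finset.prod_const, Finset.card_univ, Fintype.card_fin, ← Real.exp_nat_mul]
          congr 1
          rw [hw]
          ring
  have hchern := measure_ge_le_exp_mul_mgf (X := ∑ j, Z j) (μ := P) ((D : ℝ) * t) ht.le hintS
  have h2 : (P {ξ | (D : ℝ) * t ≤ (∑ j, Z j) ξ}).toReal ≤ Real.exp (-((D : ℝ) * t ^ 2) / 2) := by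
    refine hchern.trans ?_
    calc Real.exp (-t * ((D : ℝ) * t)) * mgf (∑ j, Z j) P t
        ≤ Real.exp (-t * ((D : ℝ) * t)) * Real.exp ((D : ℝ) * t ^ 2 / 2) :=
          mul_le_mul_of_nonneg_left hmgf (Real.exp_pos _).le
      _ = Real.exp (-((D : ℝ) * t ^ 2) / 2) := by rw [← Real.exp_add]; congr 1; ring
  have hsetEq : {ξ | (D : ℝ) * t ≤ ∑ j, Z j ξ} = {ξ | (D : ℝ) * t ≤ (∑ j, Z j) ξ} := by
    ext ξ; simp [Finset.sum_apply]
  rw [hsetEq, ← ENNReal.ofReal_toReal (measure_ne_top P {ξ | (D : ℝ) * t ≤ (∑ j, Z j) ξ})]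
  exact ENNReal.ofReal_le_ofReal h2

lemma hoeffding_two_sided {Ω : Type*} [MeasurableSpace Ω] (P : Measure Ω) [IsProbabilityMeasure P]
    {D : ℕ} {Y : Fin D → Ω → ℝ} (hmeas : ∀ j, Measurable (Y j))
    (hindep : iIndepFun Y P)
    (hbd : ∀ j ω, |Y j ω| ≤ 1) {m : ℝ} (hm : ∀ j, ∫ ω, Y j ω ∂P = m)
    {t : ℝ} (ht : 0 < t) :
    P {ξ | t ≤ |(1 / (D : ℝ)) * ∑ j, Y j ξ - m|}
      ≤ ENNReal.ofReal (2 * Real.exp (-((D : ℝ) * t ^ 2) / 2)) := by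
  rcases Nat.eq_zero_or_pos D with hD | hD
  · subst hD
    calc P {ξ | t ≤ |(1 / ((0:ℕ) : ℝ)) * ∑ j : Fin 0, Y j ξ - m|} ≤ 1 := prob_le_one
      _ ≤ ENNReal.ofReal (2 * Real.exp (-(((0:ℕ) : ℝ) * t ^ 2) / 2)) := by
          simp only [Nat.cast_zero, zero_mul, neg_zero, zero_div, Real.exp_zero, mul_one]
          norm_num
  · have hDpos : (0:ℝ) < D := Nat.cast_pos.2 hD
    have hYint : ∀ j, Integrable (Y j) P :=
      fun j => aux_int_bdd (hmeas j).aestronglyMeasurable (hbd j)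
    have hm1 : |m| ≤ 1 := by
      rw [← hm ⟨0, hD⟩]
      calc |∫ ω, Y ⟨0, hD⟩ ω ∂P| ≤ ∫ ω, |Y ⟨0, hD⟩ ω| ∂P := aux_abs_integral _
        _ ≤ ∫ _ω, (1:ℝ) ∂P := integral_mono (hYint _).abs (integrable_const 1) (hbd _)
        _ = 1 := by simp
    set Z : Fin D → Ω → ℝ := fun j ω => Y j ω - m with hZdef
    have hmeasZ : ∀ j, Measurable (Z j) := fun j => (hmeas j).sub measurable_const
    have hindepZ : iIndepFun Z P :=
      hindep.comp (fun _ => fun x : ℝ => x - m) (fun _ => measurable_id.sub measurable_const)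
    have hZa : ∀ j ω, -1 - m ≤ Z j ω := by
      intro j ω; have := abs_le.1 (hbd j ω); simp only [hZdef]; linarith [this.1]
    have hZb : ∀ j ω, Z j ω ≤ 1 - m := by
      intro j ω; have := abs_le.1 (hbd j ω); simp only [hZdef]; linarith [this.2]
    have hmeanZ : ∀ j, ∫ ω, Z j ω ∂P = 0 := by
      intro j
      simp only [hZdef]
      rw [integral_sub (hYint j) (integrable_const m), hm j, integral_const]
      simp
    have hZ'a : ∀ j ω, m - 1 ≤ -Z j ω := by intro j ω; have := hZb j ω; linarith
    have hZ'b : ∀ j ω, -Z j ω ≤ m + 1 := by intro j ω; have := hZa j ω; linarith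
    have hmeasZ' : ∀ j, Measurable (fun ω => -Z j ω) := fun j => (hmeasZ j).neg
    have hindepZ' : iIndepFun (fun j => fun ω => -Z j ω) P :=
      hindepZ.comp (fun _ => fun x : ℝ => -x) (fun _ => measurable_neg)
    have hmeanZ' : ∀ j, ∫ ω, -Z j ω ∂P = 0 := by
      intro j; rw [integral_neg, hmeanZ j]; simp
    have hsub : {ξ | t ≤ |(1 / (D : ℝ)) * ∑ j, Y j ξ - m|}
        ⊆ {ξ | (D : ℝ) * t ≤ ∑ j, Z j ξ} ∪ {ξ | (D : ℝ) * t ≤ ∑ j, (fun ω => -Z j ω) ξ} := by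
      intro ξ hξ
      simp only [Set.mem_setOf_eq] at hξ
      have hsum : ∑ j, Z j ξ = (∑ j, Y j ξ) - (D : ℝ) * m := by
        simp only [hZdef]
        rw [Finset.sum_sub_distrib, Finset.sum_const, Finset.card_univ, Fintype.card_fin,
          nsmul_eq_mul]
      have heq : (1 / (D : ℝ)) * ∑ j, Y j ξ - m = (∑ j, Z j ξ) / (D : ℝ) := by
        rw [hsum]; field_simp
      rw [heq, abs_div, abs_of_pos hDpos, le_div_iff₀ hDpos] at hξ
      rw [mul_comm] at hξ
      rcases le_abs.1 hξ with h | h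
      · left; exact h
      · right
        simp only [Set.mem_setOf_eq]
        rw [← Finset.sum_neg_distrib] at h
        exact h
    calc P {ξ | t ≤ |(1 / (D : ℝ)) * ∑ j, Y j ξ - m|}
        ≤ P ({ξ | (D : ℝ) * t ≤ ∑ j, Z j ξ} ∪ {ξ | (D : ℝ) * t ≤ ∑ j, (fun ω => -Z j ω) ξ}) :=
          measure_mono hsub
      _ ≤ P {ξ | (D : ℝ) * t ≤ ∑ j, Z j ξ} + P {ξ | (D : ℝ) * t ≤ ∑ j, (fun ω => -Z j ω) ξ} :=
          measure_union_le _ _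
      _ ≤ ENNReal.ofReal (Real.exp (-((D : ℝ) * t ^ 2) / 2))
          + ENNReal.ofReal (Real.exp (-((D : ℝ) * t ^ 2) / 2)) := by
          gcongr
          · exact chernoff_side P hmeasZ hindepZ (by linarith [abs_le.1 hm1]) (by ring)
              hZa hZb hmeanZ ht
          · exact chernoff_side P hmeasZ' hindepZ' (a := m - 1) (b := m + 1)
              (by linarith) (by ring) hZ'a hZ'b hmeanZ' ht
      _ = ENNReal.ofReal (2 * Real.exp (-((D : ℝ) * t ^ 2) / 2)) := by
          rw [← ENNReal.ofReal_add (Real.exp_pos _).le (Real.exp_pos _).le]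
          congr 1; ring

/-- **Lemma 1 (covering-number uniform convergence of random Fourier features).**
With `κ(δ) = ∫ cos⟪ω, δ⟫ dp(ω)`, `s(δ) = (1/D) ∑ⱼ cos⟪ωⱼ, δ⟫` for i.i.d. `ωⱼ ~ p`,
`X` compact contained in the ball of radius `R`, any `0 < r ≤ 2R`, `ε > 0`, and any `r`-net
`C` of cardinality `B` for the ball of radius `2R`:
`P(sup_{x,x' ∈ X} |s(x-x') - κ(x-x')| ≥ ε) ≤ 2 B exp(-Dε²/8) + (4 r σ_p / ε)²`. -/
theorem rff_uniform_convergence_net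
    {d : ℕ} (p : Measure (EuclideanSpace ℝ (Fin d))) [IsProbabilityMeasure p]
    (σp : ℝ) (hσp0 : 0 ≤ σp)
    (hmom : Integrable (fun ω : EuclideanSpace ℝ (Fin d) => ‖ω‖ ^ 2) p)
    (hσp : σp ^ 2 = ∫ ω, ‖ω‖ ^ 2 ∂p)
    (κ : EuclideanSpace ℝ (Fin d) → ℝ)
    (hκ : ∀ δ, κ δ = ∫ ω, Real.cos ⟪ω, δ⟫ ∂p)
    (X : Set (EuclideanSpace ℝ (Fin d))) (hX : IsCompact X)
    (R : ℝ) (hXR : X ⊆ Metric.closedBall 0 R)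
    {Ω : Type*} [MeasurableSpace Ω] (P : Measure Ω) [IsProbabilityMeasure P]
    (D : ℕ) (w : Fin D → Ω → EuclideanSpace ℝ (Fin d))
    (hw : ∀ j, Measurable (w j))
    (hindep : iIndepFun w P)
    (hdist : ∀ j, Measure.map (w j) P = p)
    (s : Ω → EuclideanSpace ℝ (Fin d) → ℝ)
    (hs : ∀ ξ δ, s ξ δ = (1 / (D : ℝ)) * ∑ j, Real.cos ⟪w j ξ, δ⟫)
    (r ε : ℝ) (hr0 : 0 < r) (hr2R : r ≤ 2 * R) (hε : 0 < ε)
    (B : ℕ) (C : Finset (EuclideanSpace ℝ (Fin d))) (hB : C.card = B)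
    (hcover : ∀ δ : EuclideanSpace ℝ (Fin d),
      ‖δ‖ ≤ 2 * R → ∃ c ∈ C, ‖δ - c‖ ≤ r) :
    P {ξ | ε ≤ ⨆ (x : X) (x' : X),
        |s ξ ((x : EuclideanSpace ℝ (Fin d)) - (x' : EuclideanSpace ℝ (Fin d)))
          - κ ((x : EuclideanSpace ℝ (Fin d)) - (x' : EuclideanSpace ℝ (Fin d)))|}
      ≤ ENNReal.ofReal
          (2 * B * Real.exp (-(D * ε ^ 2) / 8) + (4 * r * σp / ε) ^ 2) := by
  classical
  have hR0 : (0:ℝ) ≤ 2 * R := le_trans hr0.le hr2R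
  obtain ⟨c₀, hc₀, _⟩ := hcover 0 (by simpa using hR0)
  have hCne : C.Nonempty := ⟨c₀, hc₀⟩
  have hB1 : 1 ≤ B := by rw [← hB]; exact Finset.card_pos.2 hCne
  have hcos_meas : ∀ δ : EuclideanSpace ℝ (Fin d),
      Measurable (fun ω : EuclideanSpace ℝ (Fin d) => Real.cos ⟪ω, δ⟫) :=
    fun δ => Real.measurable_cos.comp (measurable_id.inner measurable_const)
  have hcos_int : ∀ δ, Integrable (fun ω : EuclideanSpace ℝ (Fin d) => Real.cos ⟪ω, δ⟫) p :=
    fun δ => aux_int_bdd (hcos_meas δ).aestronglyMeasurable (fun ω => Real.abs_cos_le_one _)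
  have hnorm_meas : Measurable (fun ω : EuclideanSpace ℝ (Fin d) => ‖ω‖) := measurable_norm
  have hnorm_le : ∫ ω, ‖ω‖ ∂p ≤ σp := by
    have hmem : MemLp (fun ω : EuclideanSpace ℝ (Fin d) => ‖ω‖) 2 p :=
      (memLp_two_iff_integrable_sq hnorm_meas.aestronglyMeasurable).2 hmom
    have hvar := variance_nonneg (fun ω : EuclideanSpace ℝ (Fin d) => ‖ω‖) p
    rw [variance_eq_sub hmem] at hvar
    simp only [Pi.pow_apply] at hvar
    rw [← hσp] at hvar
    nlinarith [integral_nonneg (μ := p) (f := fun ω : EuclideanSpace ℝ (Fin d) => ‖ω‖) (fun ω => norm_nonneg ω), hσp0]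
  have hκ_lip : ∀ δ c : EuclideanSpace ℝ (Fin d), |κ δ - κ c| ≤ σp * ‖δ - c‖ := by
    intro δ c
    have hnorm_int : Integrable (fun ω : EuclideanSpace ℝ (Fin d) => ‖ω‖) p := by
      have hg : Integrable (fun ω : EuclideanSpace ℝ (Fin d) => 1 + ‖ω‖ ^ 2) p :=
        (integrable_const 1).add hmom
      refine Integrable.mono' hg hnorm_meas.aestronglyMeasurable
        (Filter.Eventually.of_forall fun ω => ?_)
      rw [Real.norm_eq_abs, abs_of_nonneg (norm_nonneg ω)]
      nlinarith [norm_nonneg ω, sq_nonneg (‖ω‖ - 1)]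
    rw [hκ, hκ, ← integral_sub (hcos_int δ) (hcos_int c)]
    calc |∫ ω, (Real.cos ⟪ω, δ⟫ - Real.cos ⟪ω, c⟫) ∂p|
        ≤ ∫ ω, |Real.cos ⟪ω, δ⟫ - Real.cos ⟪ω, c⟫| ∂p := aux_abs_integral _
      _ ≤ ∫ ω, ‖ω‖ * ‖δ - c‖ ∂p := by
          refine integral_mono ((hcos_int δ).sub (hcos_int c)).abs (hnorm_int.mul_const _)
            (fun ω => ?_)
          calc |Real.cos ⟪ω, δ⟫ - Real.cos ⟪ω, c⟫| ≤ |⟪ω, δ⟫ - ⟪ω, c⟫| := aux_cos_lip _ _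
            _ = |⟪ω, δ - c⟫| := by rw [← inner_sub_right]
            _ ≤ ‖ω‖ * ‖δ - c‖ := abs_real_inner_le_norm _ _
      _ = (∫ ω, ‖ω‖ ∂p) * ‖δ - c‖ := integral_mul_const _ _
      _ ≤ σp * ‖δ - c‖ := mul_le_mul_of_nonneg_right hnorm_le (norm_nonneg _)
  rcases Nat.eq_zero_or_pos D with hD0 | hDpos
  · subst hD0
    refine le_trans prob_le_one ?_
    have hone : (1:ℝ≥0∞) = ENNReal.ofReal 1 := by simp
    rw [hone]
    apply ENNReal.ofReal_le_ofReal
    simp only [Nat.cast_zero, zero_mul, neg_zero, zero_div, Real.exp_zero, mul_one]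
    have hB2 : (2:ℝ) ≤ 2 * B := by
      have : (1:ℝ) ≤ B := by exact_mod_cast hB1
      linarith
    nlinarith [sq_nonneg (4 * r * σp / ε)]
  · have hDr : (0:ℝ) < D := Nat.cast_pos.2 hDpos
    set A : Ω → ℝ := fun ξ => (1 / (D:ℝ)) * ∑ j, ‖w j ξ‖ with hAdef
    have hA0 : ∀ ξ, 0 ≤ A ξ :=
      fun ξ => mul_nonneg (by positivity) (Finset.sum_nonneg fun j _ => norm_nonneg _)
    have hs_lip : ∀ ξ (δ c : EuclideanSpace ℝ (Fin d)), |s ξ δ - s ξ c| ≤ A ξ * ‖δ - c‖ := by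
      intro ξ δ c
      rw [hs, hs, ← mul_sub, ← Finset.sum_sub_distrib, abs_mul,
        abs_of_pos (show (0:ℝ) < 1/(D:ℝ) by positivity)]
      have h2 : |∑ j, (Real.cos ⟪w j ξ, δ⟫ - Real.cos ⟪w j ξ, c⟫)|
          ≤ ∑ j, ‖w j ξ‖ * ‖δ - c‖ := by
        refine (Finset.abs_sum_le_sum_abs _ _).trans (Finset.sum_le_sum fun j _ => ?_)
        calc |Real.cos ⟪w j ξ, δ⟫ - Real.cos ⟪w j ξ, c⟫| ≤ |⟪w j ξ, δ⟫ - ⟪w j ξ, c⟫| :=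
              aux_cos_lip _ _
          _ = |⟪w j ξ, δ - c⟫| := by rw [← inner_sub_right]
          _ ≤ ‖w j ξ‖ * ‖δ - c‖ := abs_real_inner_le_norm _ _
      calc (1/(D:ℝ)) * |∑ j, (Real.cos ⟪w j ξ, δ⟫ - Real.cos ⟪w j ξ, c⟫)|
          ≤ (1/(D:ℝ)) * (∑ j, ‖w j ξ‖ * ‖δ - c‖) :=
            mul_le_mul_of_nonneg_left h2 (by positivity)
        _ = A ξ * ‖δ - c‖ := by rw [hAdef, ← Finset.sum_mul]; ring
    set E1 : Set Ω := ⋃ c ∈ C, {ξ | ε/2 ≤ |s ξ c - κ c|} with hE1def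
    set E2 : Set Ω := {ξ | ε/(2*r) ≤ A ξ + σp} with hE2def
    have hsub : {ξ | ε ≤ ⨆ (x : X) (x' : X),
        |s ξ ((x : EuclideanSpace ℝ (Fin d)) - (x' : EuclideanSpace ℝ (Fin d)))
          - κ ((x : EuclideanSpace ℝ (Fin d)) - (x' : EuclideanSpace ℝ (Fin d)))|}
        ⊆ E1 ∪ E2 := by
      intro ξ hξ
      simp only [Set.mem_setOf_eq] at hξ
      by_contra hcon
      simp only [Set.mem_union, not_or] at hcon
      obtain ⟨h1, h2⟩ := hcon
      have h1' : ∀ c ∈ C, |s ξ c - κ c| < ε/2 := by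
        intro c hc
        by_contra hnc
        push_neg at hnc
        exact h1 (Set.mem_biUnion hc hnc)
      simp only [hE2def, Set.mem_setOf_eq, not_le] at h2
      set M := C.sup' hCne (fun c => |s ξ c - κ c|) with hM
      have hMlt : M < ε/2 := (Finset.sup'_lt_iff hCne).2 (fun c hc => h1' c hc)
      have hM0 : 0 ≤ M :=
        le_trans (abs_nonneg _) (Finset.le_sup' (fun c => |s ξ c - κ c|) hc₀)
      set K := M + (A ξ + σp) * r with hK
      have hK0 : 0 ≤ K :=
        add_nonneg hM0 (mul_nonneg (add_nonneg (hA0 ξ) hσp0) hr0.le)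
      have hbound : ∀ (x : X) (x' : X),
          |s ξ ((x : EuclideanSpace ℝ (Fin d)) - (x' : EuclideanSpace ℝ (Fin d)))
            - κ ((x : EuclideanSpace ℝ (Fin d)) - (x' : EuclideanSpace ℝ (Fin d)))| ≤ K := by
        intro x x'
        have hx : ‖(x : EuclideanSpace ℝ (Fin d))‖ ≤ R := by
          have := hXR x.2; rwa [Metric.mem_closedBall, dist_zero_right] at this
        have hx' : ‖(x' : EuclideanSpace ℝ (Fin d))‖ ≤ R := by
          have := hXR x'.2; rwa [Metric.mem_closedBall, dist_zero_right] at this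
        set δ := (x : EuclideanSpace ℝ (Fin d)) - (x' : EuclideanSpace ℝ (Fin d)) with hδdef
        have hδ : ‖δ‖ ≤ 2*R := (norm_sub_le _ _).trans (by linarith)
        obtain ⟨c, hcC, hcr⟩ := hcover δ hδ
        have hMc : |s ξ c - κ c| ≤ M := Finset.le_sup' (fun c => |s ξ c - κ c|) hcC
        calc |s ξ δ - κ δ|
            ≤ |s ξ δ - s ξ c| + |s ξ c - κ δ| := abs_sub_le _ _ _
          _ ≤ |s ξ δ - s ξ c| + (|s ξ c - κ c| + |κ c - κ δ|) := by
              have := abs_sub_le (s ξ c) (κ c) (κ δ); linarith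
          _ ≤ A ξ * ‖δ - c‖ + (M + σp * ‖c - δ‖) := by
              have l1 := hs_lip ξ δ c
              have l2 := hκ_lip c δ
              linarith
          _ ≤ A ξ * r + (M + σp * r) := by
              have hcr' : ‖c - δ‖ ≤ r := by rwa [norm_sub_rev]
              have t1 := mul_le_mul_of_nonneg_left hcr (hA0 ξ)
              have t2 := mul_le_mul_of_nonneg_left hcr' hσp0
              linarith
          _ = K := by rw [hK]; ring
      have hT : (⨆ (x : X) (x' : X),
          |s ξ ((x : EuclideanSpace ℝ (Fin d)) - (x' : EuclideanSpace ℝ (Fin d)))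
            - κ ((x : EuclideanSpace ℝ (Fin d)) - (x' : EuclideanSpace ℝ (Fin d)))|) ≤ K :=
        Real.iSup_le (fun x => Real.iSup_le (fun x' => hbound x x') hK0) hK0
      have heq : ε/(2*r) * r = ε/2 := by field_simp
      have h2' : (A ξ + σp) * r < ε/2 := by
        calc (A ξ + σp) * r < (ε/(2*r)) * r := mul_lt_mul_of_pos_right h2 hr0
          _ = ε/2 := heq
      linarith [hξ.trans hT]
    have hE1bound : P E1 ≤ ENNReal.ofReal (2 * B * Real.exp (-((D:ℝ) * ε^2)/8)) := by
      have hper : ∀ c ∈ C, P {ξ | ε/2 ≤ |s ξ c - κ c|}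
          ≤ ENNReal.ofReal (2 * Real.exp (-((D:ℝ) * ε^2)/8)) := by
        intro c _
        have hYmeas : ∀ j, Measurable (fun ξ => Real.cos ⟪w j ξ, c⟫) :=
          fun j => Real.measurable_cos.comp ((hw j).inner measurable_const)
        have hYindep : iIndepFun
            (fun j => fun ξ => Real.cos ⟪w j ξ, c⟫) P :=
          hindep.comp (fun _ => fun v => Real.cos ⟪v, c⟫) (fun _ => hcos_meas c)
        have hYbd : ∀ j ξ, |Real.cos ⟪w j ξ, c⟫| ≤ 1 := fun j ξ => Real.abs_cos_le_one _
        have hYm : ∀ j, ∫ ξ, Real.cos ⟪w j ξ, c⟫ ∂P = κ c := by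
          intro j
          rw [hκ, ← hdist j,
            integral_map (hw j).aemeasurable (hcos_meas c).aestronglyMeasurable]
        have hset : {ξ | ε/2 ≤ |s ξ c - κ c|}
            = {ξ | ε/2 ≤ |(1/(D:ℝ)) * ∑ j, Real.cos ⟪w j ξ, c⟫ - κ c|} := by
          ext ξ; rw [Set.mem_setOf_eq, Set.mem_setOf_eq, hs]
        rw [hset]
        refine (hoeffding_two_sided P hYmeas hYindep hYbd hYm (half_pos hε)).trans
          (le_of_eq ?_)
        congr 2
        ring
      calc P E1 ≤ ∑ c ∈ C, P {ξ | ε/2 ≤ |s ξ c - κ c|} := measure_biUnion_finset_le _ _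
        _ ≤ ∑ _c ∈ C, ENNReal.ofReal (2 * Real.exp (-((D:ℝ) * ε^2)/8)) :=
            Finset.sum_le_sum hper
        _ = B * ENNReal.ofReal (2 * Real.exp (-((D:ℝ) * ε^2)/8)) := by
            rw [Finset.sum_const, hB, nsmul_eq_mul]
        _ = ENNReal.ofReal ((B:ℝ) * (2 * Real.exp (-((D:ℝ)*ε^2)/8))) := by
            rw [ENNReal.ofReal_mul (by positivity : (0:ℝ) ≤ (B:ℝ)), ENNReal.ofReal_natCast]
        _ = ENNReal.ofReal (2 * B * Real.exp (-((D:ℝ) * ε^2)/8)) := by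
            congr 1; ring
    have hWint : ∀ j, Integrable (fun ξ => ‖w j ξ‖^2) P := by
      intro j
      have h : Integrable (fun ω : EuclideanSpace ℝ (Fin d) => ‖ω‖^2) (Measure.map (w j) P) := by
        rw [hdist j]; exact hmom
      exact (integrable_map_measure (hnorm_meas.pow_const 2).aestronglyMeasurable
        (hw j).aemeasurable).1 h
    have hWj : ∀ j, ∫ ξ, ‖w j ξ‖^2 ∂P = σp^2 := by
      intro j
      rw [hσp, ← hdist j,
        integral_map (hw j).aemeasurable (hnorm_meas.pow_const 2).aestronglyMeasurable]
    set W : Ω → ℝ := fun ξ => (1/(D:ℝ)) * ∑ j, ‖w j ξ‖^2 with hWdef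
    have hWint' : Integrable W P :=
      (integrable_finset_sum _ (fun j _ => hWint j)).const_mul _
    have hWavg : ∫ ξ, W ξ ∂P = σp^2 := by
      simp only [hWdef]
      rw [integral_const_mul, integral_finset_sum _ (fun j _ => hWint j)]
      simp only [hWj]
      rw [Finset.sum_const, Finset.card_univ, Fintype.card_fin, nsmul_eq_mul]
      field_simp
    have hA2W : ∀ ξ, (A ξ + σp)^2 ≤ 2 * W ξ + 2 * σp^2 := by
      intro ξ
      have hcs : (∑ j, ‖w j ξ‖)^2 ≤ (D:ℝ) * ∑ j, ‖w j ξ‖^2 := by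
        have h := sq_sum_le_card_mul_sum_sq (s := (Finset.univ : Finset (Fin D)))
          (f := fun j => ‖w j ξ‖)
        simpa [Finset.card_univ] using h
      have hAW : A ξ^2 ≤ W ξ := by
        simp only [hAdef, hWdef]
        rw [mul_pow]
        calc (1/(D:ℝ))^2 * (∑ j, ‖w j ξ‖)^2
            ≤ (1/(D:ℝ))^2 * ((D:ℝ) * ∑ j, ‖w j ξ‖^2) :=
              mul_le_mul_of_nonneg_left hcs (by positivity)
          _ = (1/(D:ℝ)) * ∑ j, ‖w j ξ‖^2 := by field_simp
      nlinarith [sq_nonneg (A ξ - σp), hAW]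
    have hAmeas : Measurable A := by
      apply Measurable.const_mul
      exact Finset.measurable_sum _ (fun j _ => (hw j).norm)
    have hL2int : Integrable (fun ξ => (A ξ + σp)^2) P := by
      refine Integrable.mono' ((hWint'.const_mul 2).add (integrable_const (2*σp^2)))
        ((hAmeas.add_const σp).pow_const 2).aestronglyMeasurable
        (Filter.Eventually.of_forall fun ξ => ?_)
      rw [Real.norm_eq_abs, abs_of_nonneg (sq_nonneg _)]
      exact hA2W ξ
    have hL2 : ∫ ξ, (A ξ + σp)^2 ∂P ≤ 4*σp^2 := by
      calc ∫ ξ, (A ξ + σp)^2 ∂P ≤ ∫ ξ, (2 * W ξ + 2*σp^2) ∂P :=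
            integral_mono hL2int ((hWint'.const_mul 2).add (integrable_const _)) hA2W
        _ = 2*σp^2 + 2*σp^2 := by
            rw [integral_add (hWint'.const_mul 2) (integrable_const _),
              integral_const_mul, hWavg, integral_const]
            simp
        _ = 4*σp^2 := by ring
    have ha0pos : 0 < ε/(2*r) := by positivity
    have hmarkov := mul_meas_ge_le_integral_of_nonneg (μ := P)
      (f := fun ξ => (A ξ + σp)^2)
      (Filter.Eventually.of_forall fun ξ => sq_nonneg _) hL2int ((ε/(2*r))^2)
    have hsubset2 : E2 ⊆ {ξ | (ε/(2*r))^2 ≤ (A ξ + σp)^2} := by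
      intro ξ hξ
      simp only [hE2def, Set.mem_setOf_eq] at hξ ⊢
      exact pow_le_pow_left₀ ha0pos.le hξ 2
    have hE2bound : P E2 ≤ ENNReal.ofReal ((4*r*σp/ε)^2) := by
      have h1 : (P {ξ | (ε/(2*r))^2 ≤ (A ξ + σp)^2}).toReal ≤ 4*σp^2 / (ε/(2*r))^2 := by
        rw [le_div_iff₀ (by positivity)]
        calc (P {ξ | (ε/(2*r))^2 ≤ (A ξ + σp)^2}).toReal * (ε/(2*r))^2
            = (ε/(2*r))^2 * (P {ξ | (ε/(2*r))^2 ≤ (A ξ + σp)^2}).toReal := mul_comm _ _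
          _ ≤ ∫ ξ, (A ξ + σp)^2 ∂P := hmarkov
          _ ≤ 4*σp^2 := hL2
      have h2 : (P E2).toReal ≤ 4*σp^2/(ε/(2*r))^2 :=
        le_trans (ENNReal.toReal_mono (measure_ne_top _ _) (measure_mono hsubset2)) h1
      calc P E2 = ENNReal.ofReal ((P E2).toReal) :=
            (ENNReal.ofReal_toReal (measure_ne_top _ _)).symm
        _ ≤ ENNReal.ofReal (4*σp^2/(ε/(2*r))^2) := ENNReal.ofReal_le_ofReal h2
        _ = ENNReal.ofReal ((4*r*σp/ε)^2) := by
            congr 1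
            field_simp
            ring
    calc P {ξ | ε ≤ ⨆ (x : X) (x' : X),
          |s ξ ((x : EuclideanSpace ℝ (Fin d)) - (x' : EuclideanSpace ℝ (Fin d)))
            - κ ((x : EuclideanSpace ℝ (Fin d)) - (x' : EuclideanSpace ℝ (Fin d)))|}
        ≤ P (E1 ∪ E2) := measure_mono hsub
      _ ≤ P E1 + P E2 := measure_union_le _ _
      _ ≤ ENNReal.ofReal (2*B*Real.exp (-((D:ℝ)*ε^2)/8)) + ENNReal.ofReal ((4*r*σp/ε)^2) :=
          add_le_add hE1bound hE2bound
      _ = ENNReal.ofReal (2*B*Real.exp (-((D:ℝ)*ε^2)/8) + (4*r*σp/ε)^2) :=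
          (ENNReal.ofReal_add (by positivity) (by positivity)).symm
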